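/- If C ⊆ Σ^n is a balanced κ-weakly mutually uncorrelated code over an alphabet Σ of size q ∈ {2,4} partitioned into two halves, then |C| ≤ binom(n, n/2) · (q/2)^n / (n - κ + 1). -/

import Mathlib

open Fin.NatCast Fin.CommRing

/-- Upper bound on the size of a balanced κ-weakly mutually uncorrelated code over
an alphabet of size q ∈ {2,4}: |C| ≤ binom(n, n/2)·(q/2)^n / (n - κ + 1). -/
theorem stmt_11 (q n κ : ℕ) (hq : q = 2 ∨ q = 4) (hev : Even n)
    (hκ1 : 1 ≤ κ) (hκ2 : κ < n)
    (C : Finset (Fin n → Fin q))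
    (hbal : ∀ c ∈ C, (Finset.univ.filter fun i => (c i).val < q / 2).card = n / 2)
    (hWMU : ∀ a ∈ C, ∀ b ∈ C, ∀ (l : ℕ), κ ≤ l → ∀ (hl : l < n),
      ¬ ∀ (i : ℕ) (hi : i < l), a ⟨i, by omega⟩ = b ⟨n - l + i, by omega⟩) :
    (C.card : ℝ) ≤ (n.choose (n / 2) : ℝ) * ((q : ℝ) / 2) ^ n / ((n : ℝ) - κ + 1) := by
  classical
  have hn : 0 < n := by omega
  haveI : NeZero n := ⟨by omega⟩
  have hq2 : 0 < q / 2 := by rcases hq with h | h <;> omega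
  have hqq : 2 * (q / 2) = q := by rcases hq with h | h <;> omega
  -- the set of balanced words
  set T : Finset (Fin n → Fin q) :=
    Finset.univ.filter
      (fun w => (Finset.univ.filter fun i => (w i).val < q / 2).card = n / 2) with hT
  -- count of balanced words
  have hTcard : T.card ≤ n.choose (n / 2) * (q / 2) ^ n := by
    have hmap : ∀ w : Fin n → Fin q, ∀ i : Fin n,
        (if (w i).val < q / 2 then (w i).val else (w i).val - q / 2) < q / 2 := by
      intro w i
      have := (w i).isLt
      by_cases h : (w i).val < q / 2 <;> simp [h] <;> omega
    have hinj := Finset.card_le_card_of_injOn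
      (f := fun w : Fin n → Fin q =>
        ((Finset.univ.filter fun i => (w i).val < q / 2),
         fun i : Fin n =>
           (⟨if (w i).val < q / 2 then (w i).val else (w i).val - q / 2, hmap w i⟩ :
             Fin (q / 2))))
      (s := T)
      (t := (Finset.univ.powersetCard (n / 2)) ×ˢ (Finset.univ : Finset (Fin n → Fin (q / 2))))
      (by
        intro w hw
        rw [hT, Finset.mem_coe, Finset.mem_filter] at hw
        rw [Finset.mem_coe, Finset.mem_product, Finset.mem_powersetCard]
        exact ⟨⟨Finset.filter_subset _ _, hw.2⟩, Finset.mem_univ _⟩)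
      (by
        intro w hw w' hw' heq
        rw [Prod.mk.injEq] at heq
        obtain ⟨h1, h2⟩ := heq
        funext i
        have hiff : (w i).val < q / 2 ↔ (w' i).val < q / 2 := by
          have := Finset.ext_iff.mp h1 i
          simpa using this
        have hval := congrFun h2 i
        have hval' :
            (if (w i).val < q / 2 then (w i).val else (w i).val - q / 2) =
            (if (w' i).val < q / 2 then (w' i).val else (w' i).val - q / 2) := by
          exact congrArg Fin.val hval
        apply Fin.ext
        by_cases h : (w i).val < q / 2
        · have h' : (w' i).val < q / 2 := hiff.mp h
          simpa [h, h'] using hval'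
        · have h' : ¬ (w' i).val < q / 2 := fun hc => h (hiff.mpr hc)
          have := (w i).isLt
          have := (w' i).isLt
          simp only [if_neg h, if_neg h'] at hval'
          omega)
    calc T.card ≤ _ := hinj
      _ = n.choose (n / 2) * (q / 2) ^ n := by
          simp [Finset.card_product, Finset.card_powersetCard, Fintype.card_fun]
  -- key WMU consequence: no nontrivial rotation relation between codewords
  have key : ∀ a ∈ C, ∀ b ∈ C, ∀ d : Fin n, 1 ≤ d.val → d.val ≤ n - κ →
      (∀ j : Fin n, a j = b (j + d)) → False := by
    intro a ha b hb d hd1 hd2 hrel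
    refine hWMU a ha b hb (n - d.val) (by omega) (by omega) ?_
    intro i hi
    have h := hrel ⟨i, by omega⟩
    rw [h]
    congr 1
    apply Fin.ext
    have hd := d.isLt
    simp only [Fin.add_def]
    have hm : (i + d.val) % n = i + d.val := Nat.mod_eq_of_lt (by omega)
    simp only [hm]
    omega
  -- the rotation map
  set F : (Fin n → Fin q) × ℕ → (Fin n → Fin q) :=
    fun p i => p.1 (i + (p.2 : Fin n)) with hF
  set D : Finset ((Fin n → Fin q) × ℕ) := C ×ˢ Finset.range (n - κ + 1) with hD
  have hmaps : ∀ p ∈ D, F p ∈ T := by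
    intro p hp
    rw [hD, Finset.mem_product] at hp
    rw [hT, Finset.mem_filter]
    refine ⟨Finset.mem_univ _, ?_⟩
    rw [← hbal p.1 hp.1]
    apply Finset.card_bij' (fun i _ => i + (p.2 : Fin n)) (fun i _ => i - (p.2 : Fin n))
    · intro i hi
      simp only [Finset.mem_filter, Finset.mem_univ, true_and] at hi ⊢
      exact hi
    · intro i hi
      simp only [Finset.mem_filter, Finset.mem_univ, true_and, hF] at hi ⊢
      have : i - (p.2 : Fin n) + (p.2 : Fin n) = i := by ring
      rw [this]
      exact hi
    · intro i _; ring
    · intro i _; ring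
  have hinjD : Set.InjOn F D := by
    intro p hp p' hp' heq
    rw [hD, Finset.coe_product] at hp hp'
    obtain ⟨hp1, hp2⟩ := hp
    obtain ⟨hp1', hp2'⟩ := hp'
    simp only [Finset.coe_range, Set.mem_Iio] at hp2 hp2'
    have hrel : ∀ i : Fin n, p.1 (i + (p.2 : Fin n)) = p'.1 (i + (p'.2 : Fin n)) :=
      fun i => congrFun heq i
    -- general step
    have step : ∀ s t : ℕ, s < t → t < n - κ + 1 →
        (∀ i : Fin n, ∀ a b : Fin n → Fin q, a ∈ C → b ∈ C →
          (∀ i : Fin n, a (i + (s : Fin n)) = b (i + (t : Fin n))) → False) := by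
      intro s t hst ht i a b ha hb hab
      have hcast : ((t : ℕ) : Fin n) = (s : Fin n) + ((t - s : ℕ) : Fin n) := by
        rw [← Nat.cast_add]; congr 1; omega
      set d : Fin n := ((t - s : ℕ) : Fin n) with hd
      have hdval : d.val = t - s := by
        rw [hd, Fin.val_natCast]
        exact Nat.mod_eq_of_lt (by omega)
      refine key a ha b hb d (by omega) (by omega) ?_
      intro j
      have h := hab (j - (s : Fin n))
      have e1 : j - (s : Fin n) + (s : Fin n) = j := by ring
      have e2 : j - (s : Fin n) + (t : Fin n) = j + d := by rw [hcast]; ring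
      rw [e1, e2] at h
      exact h
    rcases lt_trichotomy p.2 p'.2 with h | h | h
    · exact absurd (step p.2 p'.2 h hp2' 0 p.1 p'.1 (by exact_mod_cast hp1)
        (by exact_mod_cast hp1') hrel) (fun h => h)
    · have hfun : p.1 = p'.1 := by
        funext j
        have := hrel (j - (p.2 : Fin n))
        rw [h] at this
        have e : j - (p'.2 : Fin n) + (p'.2 : Fin n) = j := by ring
        rw [e] at this
        exact this
      exact Prod.ext hfun h
    · exact absurd (step p'.2 p.2 h hp2 0 p'.1 p.1 (by exact_mod_cast hp1')
        (by exact_mod_cast hp1) (fun i => (hrel i).symm)) (fun h => h)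
  have hcard : C.card * (n - κ + 1) ≤ n.choose (n / 2) * (q / 2) ^ n := by
    have h1 : D.card ≤ T.card := Finset.card_le_card_of_injOn F hmaps hinjD
    have h2 : D.card = C.card * (n - κ + 1) := by
      rw [hD, Finset.card_product, Finset.card_range]
    omega
  -- convert to reals
  have hdpos : (0 : ℝ) < (n : ℝ) - κ + 1 := by
    have : (κ : ℝ) ≤ n := by exact_mod_cast hκ2.le
    linarith
  rw [le_div_iff₀ hdpos]
  have hqcast : ((q : ℝ) / 2) = ((q / 2 : ℕ) : ℝ) := by
    rcases hq with h | h <;> subst h <;> norm_num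
  have hncast : ((n : ℝ) - κ + 1) = ((n - κ + 1 : ℕ) : ℝ) := by
    push_cast [Nat.cast_sub hκ2.le]
    ring
  rw [hqcast, hncast]
  exact_mod_cast hcard
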